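/- d'-Poincaré lemma for open subsets of ℝ^r: Let V ⊂ ℝ^r be an open set that is star shaped with centre z (i.e., z + t(x − z) ∈ V for all x ∈ V, t ∈ [0,1]). Let α ∈ A^{p,q}(V) with p > 0 and d'α = 0. Then there exists β ∈ A^{p−1,q}(V) with d'β = α. -/

import Mathlib

open Set

noncomputable section

abbrev Vec (r : ℕ) : Type := Fin r → ℝ

/-- The data of a superform of bidegree `(p,q)` on `ℝ^r`: a pointwise evaluation
on `p` tangent vectors (the `d'`-block) and `q` tangent vectors (the `d''`-block). -/
abbrev SFd (r p q : ℕ) : Type :=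
  Vec r → (Fin p → Vec r) → (Fin q → Vec r) → ℝ

/-- `g` is multilinear and alternating in its `n` vector arguments. -/
def IsAltML {r n : ℕ} (g : (Fin n → Vec r) → ℝ) : Prop :=
  (∀ (v : Fin n → Vec r) (i : Fin n) (x y : Vec r),
      g (Function.update v i (x + y)) =
        g (Function.update v i x) + g (Function.update v i y)) ∧
  (∀ (v : Fin n → Vec r) (i : Fin n) (c : ℝ) (x : Vec r),
      g (Function.update v i (c • x)) = c * g (Function.update v i x)) ∧
  (∀ (v : Fin n → Vec r) (i j : Fin n), i ≠ j → v i = v j → g v = 0)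

/-- `α` is a smooth superform of bidegree `(p,q)` on the set `U ⊆ ℝ^r`. -/
def IsSuperformOn {r p q : ℕ} (U : Set (Vec r)) (α : SFd r p q) : Prop :=
  (∀ x ∈ U, ∀ w, IsAltML fun v => α x v w) ∧
  (∀ x ∈ U, ∀ v, IsAltML fun w => α x v w) ∧
  ∀ v w, ContDiffOn ℝ (⊤ : ℕ∞) (fun x => α x v w) U

/-- The differential `d'` of superforms, acting on the `d'`-block. -/
def dP {r p q : ℕ} (α : SFd r p q) : SFd r (p + 1) q := fun x v w =>
  ∑ i : Fin (p + 1),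
    (-1 : ℝ) ^ (i : ℕ) * fderiv ℝ (fun y => α y (v ∘ i.succAbove) w) x (v i)

/-- The differential `d''` of superforms, acting on the `d''`-block,
with the sign `(-1)^p`. -/
def dPP {r p q : ℕ} (α : SFd r p q) : SFd r p (q + 1) := fun x v w =>
  (-1 : ℝ) ^ p * ∑ j : Fin (q + 1),
    (-1 : ℝ) ^ (j : ℕ) * fderiv ℝ (fun y => α y v (w ∘ j.succAbove)) x (w j)

open MeasureTheory Metric

set_option maxHeartbeats 1000000
set_option synthInstance.maxHeartbeats 400000
set_option linter.unusedSectionVars false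

section Param

variable {r : ℕ} {G : Type*} [NormedAddCommGroup G] [NormedSpace ℝ G] [CompleteSpace G]

lemma tube_lemma' {U : Set (Vec r × ℝ)} (hU : IsOpen U) {x₀ : Vec r}
    (hx : ∀ t ∈ Icc (0:ℝ) 1, (x₀, t) ∈ U) :
    ∃ ε > 0, closedBall x₀ ε ×ˢ Icc (0:ℝ) 1 ⊆ U := by
  obtain ⟨u, v, hu, hv, hxu, hIv, huv⟩ :=
    generalized_tube_lemma isCompact_singleton isCompact_Icc hU
      (by rintro ⟨a, t⟩ ⟨ha, ht⟩; rcases ha with rfl; exact hx t ht)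
  obtain ⟨ε, hε, hball⟩ := Metric.isOpen_iff.mp hu x₀ (hxu rfl)
  refine ⟨ε/2, by positivity, fun p hp => huv ⟨hball ?_, hIv hp.2⟩⟩
  have := mem_closedBall.mp hp.1
  exact mem_ball.mpr (lt_of_le_of_lt this (by linarith))

lemma hasFDerivAt_partial {f : Vec r × ℝ → G} {x : Vec r} {t : ℝ}
    (hd : DifferentiableAt ℝ f (x, t)) :
    HasFDerivAt (fun y => f (y, t))
      ((fderiv ℝ f (x, t)).comp (ContinuousLinearMap.inl ℝ (Vec r) ℝ)) x :=
  hd.hasFDerivAt.comp x (hasFDerivAt_prodMk_left x t)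

lemma hasFDerivAt_param {U : Set (Vec r × ℝ)} (hU : IsOpen U) {f : Vec r × ℝ → G}
    (hf : ContDiffOn ℝ (⊤ : ℕ∞) f U) {x₀ : Vec r} (hx : ∀ t ∈ Icc (0:ℝ) 1, (x₀, t) ∈ U) :
    HasFDerivAt (fun x => ∫ t in (0:ℝ)..1, f (x, t))
      (∫ t in (0:ℝ)..1, fderiv ℝ (fun y => f (y, t)) x₀) x₀ := by
  obtain ⟨ε, hε, hKU⟩ := tube_lemma' hU hx
  have hmem : ∀ x ∈ closedBall x₀ ε, ∀ t ∈ Icc (0:ℝ) 1, (x, t) ∈ U :=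
    fun x hxb t ht => hKU ⟨hxb, ht⟩
  have hdiffU : ∀ z ∈ U, DifferentiableAt ℝ f z := fun z hz =>
    (hf.differentiableOn (by simp)).differentiableAt (hU.mem_nhds hz)
  set F' : Vec r → ℝ → (Vec r →L[ℝ] G) := fun x t =>
    (fderiv ℝ f (x, t)).comp (ContinuousLinearMap.inl ℝ (Vec r) ℝ) with hF'
  have hpart : ∀ x ∈ closedBall x₀ ε, ∀ t ∈ Icc (0:ℝ) 1,
      HasFDerivAt (fun y => f (y, t)) (F' x t) x :=
    fun x hxb t ht => hasFDerivAt_partial (hdiffU _ (hmem x hxb t ht))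
  have hfc : ContinuousOn (fun z : Vec r × ℝ =>
      (fderiv ℝ f z).comp (ContinuousLinearMap.inl ℝ (Vec r) ℝ)) U :=
    (((ContinuousLinearMap.compL ℝ (Vec r) (Vec r × ℝ) G).flip
      (ContinuousLinearMap.inl ℝ (Vec r) ℝ)).continuous).comp_continuousOn
      (hf.continuousOn_fderiv_of_isOpen hU (mod_cast le_top))
  have hK : IsCompact (closedBall x₀ ε ×ˢ Icc (0:ℝ) 1) :=
    (isCompact_closedBall _ _).prod isCompact_Icc
  obtain ⟨C, hC⟩ := hK.exists_bound_of_continuousOn (hfc.mono hKU)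
  have hIoc : Set.uIoc (0:ℝ) 1 ⊆ Icc (0:ℝ) 1 := by
    rw [uIoc_of_le (zero_le_one)]; exact Ioc_subset_Icc_self
  have hcball : x₀ ∈ closedBall x₀ ε := mem_closedBall_self hε.le
  have hcont : ∀ x ∈ closedBall x₀ ε, ContinuousOn (fun t => f (x, t)) (Icc (0:ℝ) 1) := by
    intro x hxb
    exact hf.continuousOn.comp ((continuous_const.prodMk continuous_id).continuousOn)
      (fun t ht => hmem x hxb t ht)
  have hmain : HasFDerivAt (fun x => ∫ t in (0:ℝ)..1, f (x, t))
      (∫ t in (0:ℝ)..1, F' x₀ t) x₀ := by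
    apply intervalIntegral.hasFDerivAt_integral_of_dominated_of_fderiv_le
      (F := fun x t => f (x, t)) (F' := F') (bound := fun _ => C) (ball_mem_nhds x₀ hε)
    · filter_upwards [closedBall_mem_nhds x₀ hε] with x hxb
      exact ((hcont x hxb).mono hIoc).aestronglyMeasurable measurableSet_uIoc
    · exact ((hcont x₀ hcball).intervalIntegrable_of_Icc zero_le_one)
    · refine (ContinuousOn.aestronglyMeasurable ?_ measurableSet_uIoc)
      exact (hfc.comp ((continuous_const.prodMk continuous_id).continuousOn)
        (fun t ht => hmem x₀ hcball t ht)).mono hIoc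
    · filter_upwards with t ht x hxb
      exact hC (x, t) ⟨ball_subset_closedBall hxb, hIoc ht⟩
    · exact intervalIntegrable_const
    · filter_upwards with t ht x hxb
      exact hpart x (ball_subset_closedBall hxb) t (hIoc ht)
  have : (∫ t in (0:ℝ)..1, F' x₀ t) =
      ∫ t in (0:ℝ)..1, fderiv ℝ (fun y => f (y, t)) x₀ := by
    refine intervalIntegral.integral_congr (fun t ht => ?_)
    rw [uIcc_of_le zero_le_one] at ht
    exact ((hpart x₀ hcball t ht).fderiv).symm
  rwa [this] at hmain

lemma continuousAt_param {U : Set (Vec r × ℝ)} (hU : IsOpen U) {f : Vec r × ℝ → G}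
    (hf : ContDiffOn ℝ (⊤ : ℕ∞) f U) {x₀ : Vec r} (hx : ∀ t ∈ Icc (0:ℝ) 1, (x₀, t) ∈ U) :
    ContinuousAt (fun x => ∫ t in (0:ℝ)..1, f (x, t)) x₀ := by
  obtain ⟨ε, hε, hKU⟩ := tube_lemma' hU hx
  have hmem : ∀ x ∈ closedBall x₀ ε, ∀ t ∈ Icc (0:ℝ) 1, (x, t) ∈ U :=
    fun x hxb t ht => hKU ⟨hxb, ht⟩
  have hK : IsCompact (closedBall x₀ ε ×ˢ Icc (0:ℝ) 1) :=
    (isCompact_closedBall _ _).prod isCompact_Icc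
  obtain ⟨C, hC⟩ := hK.exists_bound_of_continuousOn ((hf.continuousOn).mono hKU)
  have hIoc : Set.uIoc (0:ℝ) 1 ⊆ Icc (0:ℝ) 1 := by
    rw [uIoc_of_le (zero_le_one)]; exact Ioc_subset_Icc_self
  have hcont : ∀ x ∈ closedBall x₀ ε, ContinuousOn (fun t => f (x, t)) (Icc (0:ℝ) 1) := by
    intro x hxb
    exact hf.continuousOn.comp ((continuous_const.prodMk continuous_id).continuousOn)
      (fun t ht => hmem x hxb t ht)
  apply intervalIntegral.continuousAt_of_dominated_interval (bound := fun _ => C)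
  · filter_upwards [closedBall_mem_nhds x₀ hε] with x hxb
    exact ((hcont x hxb).mono hIoc).aestronglyMeasurable measurableSet_uIoc
  · filter_upwards [closedBall_mem_nhds x₀ hε] with x hxb
    filter_upwards with t ht
    exact hC (x, t) ⟨hxb, hIoc ht⟩
  · exact intervalIntegrable_const
  · filter_upwards with t ht
    have hco : ContinuousOn (fun x : Vec r => f (x, t)) (closedBall x₀ ε) :=
      hf.continuousOn.comp ((continuous_id.prodMk continuous_const).continuousOn)
        (fun y hy => hmem y hy t (hIoc ht))
    exact hco.continuousAt (closedBall_mem_nhds x₀ hε)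

lemma contDiffAt_param (n : ℕ) {G : Type*} [NormedAddCommGroup G] [NormedSpace ℝ G]
    [CompleteSpace G] {U : Set (Vec r × ℝ)} (hU : IsOpen U) {f : Vec r × ℝ → G}
    (hf : ContDiffOn ℝ (⊤ : ℕ∞) f U) {x₀ : Vec r} (hx : ∀ t ∈ Icc (0:ℝ) 1, (x₀, t) ∈ U) :
    ContDiffAt ℝ n (fun x => ∫ t in (0:ℝ)..1, f (x, t)) x₀ := by
  induction n generalizing G with
  | zero =>
    obtain ⟨ε, hε, hKU⟩ := tube_lemma' hU hx
    refine contDiffAt_zero.mpr ⟨ball x₀ ε, ball_mem_nhds _ hε, fun x hxb => ?_⟩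
    exact (continuousAt_param hU hf
      (fun t ht => hKU ⟨ball_subset_closedBall hxb, ht⟩)).continuousWithinAt
  | succ n ih =>
    obtain ⟨ε, hε, hKU⟩ := tube_lemma' hU hx
    have hf' : ContDiffOn ℝ (⊤ : ℕ∞) (fun z : Vec r × ℝ =>
        (fderiv ℝ f z).comp (ContinuousLinearMap.inl ℝ (Vec r) ℝ)) U :=
      (hf.fderiv_of_isOpen hU (by exact_mod_cast le_top)).clm_comp contDiffOn_const
    have hcast : ((n + 1 : ℕ) : WithTop ℕ∞) = (n : WithTop ℕ∞) + 1 := by push_cast; rfl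
    rw [hcast, contDiffAt_succ_iff_hasFDerivAt]
    refine ⟨fun x => ∫ t in (0:ℝ)..1,
        (fderiv ℝ f (x, t)).comp (ContinuousLinearMap.inl ℝ (Vec r) ℝ),
      ⟨ball x₀ ε, ball_mem_nhds _ hε, fun x hxb => ?_⟩, ih hf'⟩
    have hmem : ∀ t ∈ Icc (0:ℝ) 1, (x, t) ∈ U :=
      fun t ht => hKU ⟨ball_subset_closedBall hxb, ht⟩
    have h1 := hasFDerivAt_param hU hf hmem
    have h2 : (∫ t in (0:ℝ)..1, fderiv ℝ (fun y => f (y, t)) x) =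
        ∫ t in (0:ℝ)..1, (fderiv ℝ f (x, t)).comp (ContinuousLinearMap.inl ℝ (Vec r) ℝ) := by
      refine intervalIntegral.integral_congr (fun t ht => ?_)
      rw [uIcc_of_le zero_le_one] at ht
      exact (hasFDerivAt_partial ((hf.differentiableOn (by simp)).differentiableAt
        (hU.mem_nhds (hmem t ht)))).fderiv
    rwa [h2] at h1

end Param
section Alg

variable {r n : ℕ}

lemma IsAltML.upd_zero {g : (Fin n → Vec r) → ℝ} (hg : IsAltML g)
    (A : Fin n → Vec r) (i : Fin n) : g (Function.update A i 0) = 0 := by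
  have h := hg.2.1 A i 0 0
  rw [zero_smul, zero_mul] at h
  exact h

lemma IsAltML.upd_sum {ι : Type*} {g : (Fin n → Vec r) → ℝ} (hg : IsAltML g)
    (A : Fin n → Vec r) (i : Fin n) (s : Finset ι) (F : ι → Vec r) :
    g (Function.update A i (∑ k ∈ s, F k)) = ∑ k ∈ s, g (Function.update A i (F k)) := by
  classical
  induction s using Finset.induction_on with
  | empty => simpa using hg.upd_zero A i
  | insert _ _ hne ih =>
    rw [Finset.sum_insert hne, hg.1, ih, Finset.sum_insert hne]

lemma IsAltML.expand {g : (Fin n → Vec r) → ℝ} (hg : IsAltML g)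
    (A : Fin n → Vec r) (i : Fin n) (u : Vec r) :
    g (Function.update A i u) =
      ∑ k : Fin r, u k * g (Function.update A i (Pi.single k 1)) := by
  have hu : u = ∑ k : Fin r, u k • (Pi.single k (1:ℝ) : Vec r) := by
    funext j
    simp [Finset.sum_apply, Pi.single_apply, mul_comm]
  conv_lhs => rw [hu, hg.upd_sum]
  exact Finset.sum_congr rfl fun k _ => hg.2.1 A i (u k) _

lemma IsAltML.cons_expand {g : (Fin (n+1) → Vec r) → ℝ} (hg : IsAltML g)
    (u : Vec r) (v : Fin n → Vec r) :
    g (Fin.cons u v) = ∑ k : Fin r, u k * g (Fin.cons (Pi.single k 1) v) := by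
  have h0 : ∀ a : Vec r, (Fin.cons a v : Fin (n+1) → Vec r) =
      Function.update (Fin.cons (0 : Vec r) v : Fin (n+1) → Vec r) 0 a :=
    fun a => by rw [Fin.update_cons_zero]
  rw [h0 u, hg.expand]
  exact Finset.sum_congr rfl fun k _ => by rw [← h0]

/-- Build an `AlternatingMap` from `IsAltML`. -/
def IsAltML.toAlt {g : (Fin n → Vec r) → ℝ} (hg : IsAltML g) :
    AlternatingMap ℝ (Vec r) ℝ (Fin n) where
  toFun := g
  map_update_add' := by
    intro inst A i x y
    have : inst = instDecidableEqFin n := Subsingleton.elim _ _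
    subst this
    exact hg.1 A i x y
  map_update_smul' := by
    intro inst A i c x
    have : inst = instDecidableEqFin n := Subsingleton.elim _ _
    subst this
    exact hg.2.1 A i c x
  map_eq_zero_of_eq' := fun A i j hv hij => hg.2.2 A i j hij hv

lemma IsAltML.cons_self {g : (Fin (n+1) → Vec r) → ℝ} (hg : IsAltML g)
    (v : Fin (n+1) → Vec r) (i : Fin (n+1)) :
    g (Fin.cons (v i) (v ∘ i.succAbove)) = (-1:ℝ)^(i:ℕ) * g v := by
  have hv : Fin.cons (v i) (v ∘ i.succAbove) = v ∘ ⇑(i.cycleRange).symm := by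
    funext j
    induction j using Fin.cases with
    | zero => simp [Fin.cycleRange_symm_zero]
    | succ j => simp [Fin.cycleRange_symm_succ]
  have hperm := hg.toAlt.map_perm v ((i.cycleRange)⁻¹)
  have hcoe : ⇑((i.cycleRange)⁻¹) = ⇑(i.cycleRange).symm := rfl
  have hsign : Equiv.Perm.sign ((i.cycleRange)⁻¹) = (-1) ^ (i : ℕ) := by
    rw [map_inv, Fin.sign_cycleRange]
    exact (Int.units_inv_eq_self _)
  rw [hcoe] at hperm
  have hg1 : (hg.toAlt : (Fin (n+1) → Vec r) → ℝ) = g := rfl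
  calc g (Fin.cons (v i) (v ∘ i.succAbove)) = g (v ∘ ⇑(i.cycleRange).symm) := by rw [hv]
    _ = Equiv.Perm.sign ((i.cycleRange)⁻¹) • g v := hperm
    _ = (-1:ℝ)^(i:ℕ) * g v := by
        rw [hsign, Units.smul_def]
        push_cast
        rw [zsmul_eq_mul]
        push_cast
        ring

lemma cons_comp_succAbove_zero {M : Type*} (a : M) (v : Fin (n+1) → M) :
    (Fin.cons a v : Fin (n+2) → M) ∘ (Fin.succAbove 0) = v := by
  funext j
  simp [Fin.succAbove_zero]

lemma cons_comp_succAbove_succ {M : Type*} (a : M) (v : Fin (n+1) → M) (i : Fin (n+1)) :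
    (Fin.cons a v : Fin (n+2) → M) ∘ ((i.succ).succAbove) = Fin.cons a (v ∘ i.succAbove) := by
  funext j
  induction j using Fin.cases with
  | zero => simp
  | succ j => simp [Fin.succ_succAbove_succ]

end Alg

/-- d'-Poincaré lemma for open subsets of `ℝ^r`: on an open set
`V ⊆ ℝ^r` star shaped with centre `z`, every `d'`-closed superform of bidegree
`(p,q)` with `p > 0` is `d'`-exact. -/
theorem dP_poincare_lemma {r p q : ℕ} (V : Set (Vec r)) (hV : IsOpen V)
    (z : Vec r) (hstar : ∀ x ∈ V, ∀ t ∈ Icc (0 : ℝ) 1, z + t • (x - z) ∈ V)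
    (α : SFd r (p + 1) q) (hα : IsSuperformOn V α)
    (hclosed : ∀ x ∈ V, ∀ v w, dP α x v w = 0) :
    ∃ β : SFd r p q, IsSuperformOn V β ∧
      ∀ x ∈ V, ∀ v w, dP β x v w = α x v w := by

  classical
  obtain ⟨hαv, hαw, hαsm⟩ := hα
  set γ : Vec r × ℝ → Vec r := fun zt => z + zt.2 • (zt.1 - z) with hγdef
  set U : Set (Vec r × ℝ) := γ ⁻¹' V with hUdef
  have hγcont : Continuous γ := by
    apply continuous_const.add
    exact continuous_snd.smul (continuous_fst.sub continuous_const)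
  have hγsm : ContDiff ℝ (⊤ : ℕ∞) γ := by
    apply ContDiff.add contDiff_const
    exact ContDiff.smul contDiff_snd (contDiff_fst.sub contDiff_const)
  have hUopen : IsOpen U := hV.preimage hγcont
  have htube : ∀ x ∈ V, ∀ t ∈ Icc (0:ℝ) 1, (x, t) ∈ U := fun x hx t ht => hstar x hx t ht
  have hdiffα : ∀ (A : Fin (p+1) → Vec r) (w) (y : Vec r), y ∈ V →
      DifferentiableAt ℝ (fun y' => α y' A w) y :=
    fun A w y hy => ((hαsm A w).differentiableOn (by simp)).differentiableAt
      (hV.mem_nhds hy)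
  have hLcont : ∀ (A : Fin (p+1) → Vec r) (w),
      ContinuousOn (fun y => fderiv ℝ (fun y' => α y' A w) y) V :=
    fun A w => (hαsm A w).continuousOn_fderiv_of_isOpen hV (mod_cast le_top)
  have hΦ : ∀ (A : Fin (p+1) → Vec r) (w), ContDiffOn ℝ (⊤:ℕ∞) (fun zt => α (γ zt) A w) U :=
    fun A w => (hαsm A w).comp hγsm.contDiffOn (fun zt hzt => hzt)
  have hfsm : ∀ (m : ℕ) (A : Fin (p+1) → Vec r) (w),
      ContDiffOn ℝ (⊤:ℕ∞) (fun zt : Vec r × ℝ => zt.2 ^ m * α (γ zt) A w) U :=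
    fun m A w => ((contDiff_snd.pow m).contDiffOn).mul (hΦ A w)
  have hline : ∀ x : Vec r, Continuous (fun t : ℝ => γ (x, t)) := fun x =>
    hγcont.comp (continuous_const.prodMk continuous_id)
  have hcontt : ∀ x ∈ V, ∀ (m : ℕ) (A : Fin (p+1) → Vec r) (w),
      ContinuousOn (fun t => t^m * α (γ (x,t)) A w) (Icc (0:ℝ) 1) :=
    fun x hx m A w => ((continuous_pow m).continuousOn).mul
      (((hαsm A w).continuousOn.comp (hline x).continuousOn (fun t ht => hstar x hx t ht)))
  have hInt : ∀ x ∈ V, ∀ (m : ℕ) (A : Fin (p+1) → Vec r) (w),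
      IntervalIntegrable (fun t => t^m * α (γ (x,t)) A w) MeasureTheory.volume 0 1 :=
    fun x hx m A w => (hcontt x hx m A w).intervalIntegrable_of_Icc zero_le_one
  have hαadd : ∀ y ∈ V, ∀ (w) (A : Fin (p+1) → Vec r) (i : Fin (p+1)) (a b : Vec r),
      α y (Function.update A i (a+b)) w =
        α y (Function.update A i a) w + α y (Function.update A i b) w :=
    fun y hy w A i a b => (hαv y hy w).1 A i a b
  have hαsmul : ∀ y ∈ V, ∀ (w) (A : Fin (p+1) → Vec r) (i : Fin (p+1)) (c : ℝ) (a : Vec r),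
      α y (Function.update A i (c • a)) w = c * α y (Function.update A i a) w :=
    fun y hy w A i c a => (hαv y hy w).2.1 A i c a
  have hαzero : ∀ y ∈ V, ∀ (w) (A : Fin (p+1) → Vec r) (i j : Fin (p+1)), i ≠ j → A i = A j →
      α y A w = 0 := fun y hy w A i j hij hA => (hαv y hy w).2.2 A i j hij hA
  have hwadd : ∀ y ∈ V, ∀ (A : Fin (p+1) → Vec r) (w : Fin q → Vec r) (j : Fin q) (a b : Vec r),
      α y A (Function.update w j (a+b)) =
        α y A (Function.update w j a) + α y A (Function.update w j b) :=
    fun y hy A w j a b => (hαw y hy A).1 w j a b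
  have hwsmul : ∀ y ∈ V, ∀ (A : Fin (p+1) → Vec r) (w : Fin q → Vec r) (j : Fin q) (c : ℝ) (a : Vec r),
      α y A (Function.update w j (c • a)) = c * α y A (Function.update w j a) :=
    fun y hy A w j c a => (hαw y hy A).2.1 w j c a
  have hwzero : ∀ y ∈ V, ∀ (A : Fin (p+1) → Vec r) (w : Fin q → Vec r) (i j : Fin q), i ≠ j →
      w i = w j → α y A w = 0 := fun y hy A w i j hij hw => (hαw y hy A).2.2 w i j hij hw
  set e : Fin r → Vec r := fun k => Pi.single k 1 with hedef
  have hαexp : ∀ y ∈ V, ∀ (w) (u : Vec r) (v' : Fin p → Vec r),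
      α y (Fin.cons u v') w = ∑ k : Fin r, u k * α y (Fin.cons (e k) v') w :=
    fun y hy w u v' => (hαv y hy w).cons_expand u v'
  have hαcons : ∀ y ∈ V, ∀ (w) (v : Fin (p+1) → Vec r) (i : Fin (p+1)),
      α y (Fin.cons (v i) (v ∘ i.succAbove)) w = (-1:ℝ)^(i:ℕ) * α y v w :=
    fun y hy w v i => (hαv y hy w).cons_self v i
  set Gf : (Fin (p+1) → Vec r) → (Fin q → Vec r) → Vec r → ℝ :=
    fun A w x => ∫ t in (0:ℝ)..1, t^p * α (γ (x,t)) A w with hGdef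
  set β : SFd r p q :=
    fun x v w => Gf (Fin.cons (x - z) v) w x with hβdef
  -- expansion of β on V
  have hexp : ∀ y ∈ V, ∀ (v' : Fin p → Vec r) (w),
      β y v' w = ∑ k : Fin r, (y k - z k) * Gf (Fin.cons (e k) v') w y := by
    intro y hy v' w
    have h1 : β y v' w = ∫ t in (0:ℝ)..1,
        ∑ k : Fin r, (y k - z k) * (t^p * α (γ (y,t)) (Fin.cons (e k) v') w) := by
      apply intervalIntegral.integral_congr
      intro t ht
      rw [uIcc_of_le zero_le_one] at ht
      have hmem := hstar y hy t ht
      show t^p * α (γ (y,t)) (Fin.cons (y - z) v') w = _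
      rw [hαexp _ hmem w (y - z) v', Finset.mul_sum]
      refine Finset.sum_congr rfl fun k _ => ?_
      have : (y - z) k = y k - z k := rfl
      rw [this]; ring
    rw [h1, intervalIntegral.integral_finset_sum
      (fun k _ => (hInt y hy p (Fin.cons (e k) v') w).const_mul _)]
    exact Finset.sum_congr rfl fun k _ => intervalIntegral.integral_const_mul _ _
  have hGsm : ∀ (A : Fin (p+1) → Vec r) (w), ContDiffOn ℝ (⊤:ℕ∞) (Gf A w) V := by
    intro A w
    intro x hx
    have : ∀ n : ℕ, ContDiffWithinAt ℝ n (Gf A w) V x := fun n =>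
      (contDiffAt_param n hUopen (hfsm p A w) (htube x hx)).contDiffWithinAt
    exact contDiffWithinAt_infty.mpr this
  have hβsm : ∀ v w, ContDiffOn ℝ (⊤:ℕ∞) (fun x => β x v w) V := by
    intro v w
    have hsum : ContDiffOn ℝ (⊤:ℕ∞)
        (fun x => ∑ k : Fin r, (x k - z k) * Gf (Fin.cons (e k) v) w x) V := by
      apply ContDiffOn.sum
      intro k _
      exact (((ContinuousLinearMap.proj (R := ℝ) (φ := fun _ : Fin r => ℝ) k).contDiff.sub
        contDiff_const).contDiffOn).mul (hGsm _ w)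
    exact hsum.congr (fun x hx => hexp x hx v w)
  have hβv : ∀ x ∈ V, ∀ w, IsAltML fun v => β x v w := by
    intro x hx w
    refine ⟨fun v i a b => ?_, fun v i c a => ?_, fun v i j hij hv => ?_⟩
    · have key : ∀ t ∈ uIcc (0:ℝ) 1,
          t^p * α (γ (x,t)) (Fin.cons (x - z) (Function.update v i (a + b))) w =
          t^p * α (γ (x,t)) (Fin.cons (x - z) (Function.update v i a)) w +
          t^p * α (γ (x,t)) (Fin.cons (x - z) (Function.update v i b)) w := by
        intro t ht
        rw [uIcc_of_le zero_le_one] at ht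
        have hmem := hstar x hx t ht
        rw [Fin.cons_update, Fin.cons_update, Fin.cons_update, hαadd _ hmem w]
        ring
      show Gf _ w x = Gf _ w x + Gf _ w x
      rw [show Gf (Fin.cons (x - z) (Function.update v i (a+b))) w x = _ from
        intervalIntegral.integral_congr key]
      exact intervalIntegral.integral_add (hInt x hx p _ w) (hInt x hx p _ w)
    · have key : ∀ t ∈ uIcc (0:ℝ) 1,
          t^p * α (γ (x,t)) (Fin.cons (x - z) (Function.update v i (c • a))) w =
          c * (t^p * α (γ (x,t)) (Fin.cons (x - z) (Function.update v i a)) w) := by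
        intro t ht
        rw [uIcc_of_le zero_le_one] at ht
        have hmem := hstar x hx t ht
        rw [Fin.cons_update, Fin.cons_update, hαsmul _ hmem w]
        ring
      show Gf _ w x = c * Gf _ w x
      rw [show Gf (Fin.cons (x - z) (Function.update v i (c • a))) w x = _ from
        intervalIntegral.integral_congr key]
      exact intervalIntegral.integral_const_mul _ _
    · have key : ∀ t ∈ uIcc (0:ℝ) 1,
          t^p * α (γ (x,t)) (Fin.cons (x - z) v) w = (0:ℝ) := by
        intro t ht
        rw [uIcc_of_le zero_le_one] at ht
        have hmem := hstar x hx t ht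
        have : α (γ (x,t)) (Fin.cons (x - z) v) w = 0 := by
          apply hαzero _ hmem w _ i.succ j.succ (by simpa using hij)
          simp [Fin.cons_succ, hv]
        rw [this, mul_zero]
      show Gf _ w x = 0
      rw [show Gf (Fin.cons (x - z) v) w x = _ from intervalIntegral.integral_congr key]
      simp
  have hβw : ∀ x ∈ V, ∀ v, IsAltML fun w => β x v w := by
    intro x hx v
    refine ⟨fun w j a b => ?_, fun w j c a => ?_, fun w i j hij hw => ?_⟩
    · have key : ∀ t ∈ uIcc (0:ℝ) 1,
          t^p * α (γ (x,t)) (Fin.cons (x - z) v) (Function.update w j (a + b)) =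
          t^p * α (γ (x,t)) (Fin.cons (x - z) v) (Function.update w j a) +
          t^p * α (γ (x,t)) (Fin.cons (x - z) v) (Function.update w j b) := by
        intro t ht
        rw [uIcc_of_le zero_le_one] at ht
        rw [hwadd _ (hstar x hx t ht)]; ring
      show Gf _ _ x = Gf _ _ x + Gf _ _ x
      rw [show Gf (Fin.cons (x - z) v) (Function.update w j (a+b)) x = _ from
        intervalIntegral.integral_congr key]
      exact intervalIntegral.integral_add (hInt x hx p _ _) (hInt x hx p _ _)
    · have key : ∀ t ∈ uIcc (0:ℝ) 1,
          t^p * α (γ (x,t)) (Fin.cons (x - z) v) (Function.update w j (c • a)) =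
          c * (t^p * α (γ (x,t)) (Fin.cons (x - z) v) (Function.update w j a)) := by
        intro t ht
        rw [uIcc_of_le zero_le_one] at ht
        rw [hwsmul _ (hstar x hx t ht)]; ring
      show Gf _ _ x = c * Gf _ _ x
      rw [show Gf (Fin.cons (x - z) v) (Function.update w j (c • a)) x = _ from
        intervalIntegral.integral_congr key]
      exact intervalIntegral.integral_const_mul _ _
    · have key : ∀ t ∈ uIcc (0:ℝ) 1,
          t^p * α (γ (x,t)) (Fin.cons (x - z) v) w = (0:ℝ) := by
        intro t ht
        rw [uIcc_of_le zero_le_one] at ht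
        rw [hwzero _ (hstar x hx t ht) _ w i j hij hw, mul_zero]
      show Gf _ _ x = 0
      rw [show Gf (Fin.cons (x - z) v) w x = _ from intervalIntegral.integral_congr key]
      simp
  refine ⟨β, ⟨hβv, hβw, hβsm⟩, ?_⟩
  intro x hx v w
  have hLexp : ∀ y₁ ∈ V, ∀ (u : Vec r) (v'' : Fin p → Vec r),
      fderiv ℝ (fun y => α y (Fin.cons u v'') w) y₁ =
        ∑ k : Fin r, u k • fderiv ℝ (fun y => α y (Fin.cons (e k) v'') w) y₁ := by
    intro y₁ hy₁ u v''
    have hev : (fun y => α y (Fin.cons u v'') w) =ᶠ[nhds y₁]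
        (fun y => ∑ k : Fin r, u k * α y (Fin.cons (e k) v'') w) :=
      Filter.eventuallyEq_of_mem (hV.mem_nhds hy₁) (fun y hy => hαexp y hy w u v'')
    rw [hev.fderiv_eq, fderiv_fun_sum (fun k _ => (hdiffα _ w y₁ hy₁).const_mul _)]
    exact Finset.sum_congr rfl fun k _ => fderiv_const_mul (hdiffα _ w y₁ hy₁) _
  have hDint : ∀ (A : Fin (p+1) → Vec r), IntervalIntegrable
      (fun t => (t^(p+1) • fderiv ℝ (fun y => α y A w) (γ (x,t)) : Vec r →L[ℝ] ℝ))
      MeasureTheory.volume 0 1 := by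
    intro A
    apply ContinuousOn.intervalIntegrable_of_Icc zero_le_one
    exact ((continuous_pow (p+1)).continuousOn).smul
      ((hLcont A w).comp (hline x).continuousOn (fun t ht => hstar x hx t ht))
  have hDint' : ∀ (A : Fin (p+1) → Vec r) (u : Vec r), IntervalIntegrable
      (fun t => t^(p+1) * fderiv ℝ (fun y => α y A w) (γ (x,t)) u) MeasureTheory.volume 0 1 := by
    intro A u
    apply ContinuousOn.intervalIntegrable_of_Icc zero_le_one
    exact ((continuous_pow (p+1)).continuousOn).mul
      (((hLcont A w).comp (hline x).continuousOn
        (fun t ht => hstar x hx t ht)).clm_apply continuousOn_const)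
  have hGd : ∀ (A : Fin (p+1) → Vec r), HasFDerivAt (Gf A w)
      (∫ t in (0:ℝ)..1,
        (t^(p+1) • fderiv ℝ (fun y => α y A w) (γ (x,t)) : Vec r →L[ℝ] ℝ)) x := by
    intro A
    have h1 := hasFDerivAt_param hUopen (hfsm p A w) (htube x hx)
    have h2 : (∫ t in (0:ℝ)..1, fderiv ℝ (fun y =>
          (fun zt : Vec r × ℝ => zt.2 ^ p * α (γ zt) A w) (y, t)) x) =
        ∫ t in (0:ℝ)..1,
          (t^(p+1) • fderiv ℝ (fun y => α y A w) (γ (x,t)) : Vec r →L[ℝ] ℝ) := by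
      refine intervalIntegral.integral_congr fun t ht => ?_
      rw [uIcc_of_le zero_le_one] at ht
      have hγt : HasFDerivAt (fun y : Vec r => γ (y, t))
          ((t : ℝ) • ContinuousLinearMap.id ℝ (Vec r)) x :=
        (((hasFDerivAt_id x).sub_const z).const_smul t).const_add z
      have hout := (hdiffα A w _ (hstar x hx t ht)).hasFDerivAt
      have hcomp := (hout.comp x hγt).const_mul (t^p)
      have heq : (t^p) • ((fderiv ℝ (fun y => α y A w) (γ (x,t))).comp
          ((t : ℝ) • ContinuousLinearMap.id ℝ (Vec r))) =
          t^(p+1) • fderiv ℝ (fun y => α y A w) (γ (x,t)) := by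
        ext u
        simp only [ContinuousLinearMap.smul_apply, ContinuousLinearMap.coe_comp',
          Function.comp_apply, ContinuousLinearMap.coe_id', id_eq, smul_eq_mul, pow_succ]
        rw [ContinuousLinearMap.map_smul]
        simp only [smul_eq_mul]
        ring
      rw [heq] at hcomp
      exact hcomp.fderiv
    rw [h2] at h1
    exact h1
  have hslice : ∀ i : Fin (p+1),
      fderiv ℝ (fun y => β y (v ∘ i.succAbove) w) x (v i) =
      ∫ t in (0:ℝ)..1,
        (t^p * α (γ (x,t)) (Fin.cons (v i) (v ∘ i.succAbove)) w +
         t^(p+1) * fderiv ℝ (fun y => α y (Fin.cons (x - z) (v ∘ i.succAbove)) w)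
           (γ (x,t)) (v i)) := by
    intro i
    set v' : Fin p → Vec r := v ∘ i.succAbove with hv'
    have hH : HasFDerivAt (fun y => ∑ k : Fin r, (y k - z k) * Gf (Fin.cons (e k) v') w y)
        (∑ k : Fin r, ((x k - z k) •
            (∫ t in (0:ℝ)..1, (t^(p+1) •
              fderiv ℝ (fun y => α y (Fin.cons (e k) v') w) (γ (x,t)) : Vec r →L[ℝ] ℝ))
          + Gf (Fin.cons (e k) v') w x •
              (ContinuousLinearMap.proj k : Vec r →L[ℝ] ℝ))) x := by
      apply HasFDerivAt.fun_sum
      intro k _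
      have hc : HasFDerivAt (fun y : Vec r => y k - z k)
          (ContinuousLinearMap.proj k : Vec r →L[ℝ] ℝ) x :=
        (ContinuousLinearMap.proj k : Vec r →L[ℝ] ℝ).hasFDerivAt.sub_const (z k)
      exact hc.mul (hGd (Fin.cons (e k) v'))
    have hev : (fun y => β y v' w) =ᶠ[nhds x]
        (fun y => ∑ k : Fin r, (y k - z k) * Gf (Fin.cons (e k) v') w y) :=
      Filter.eventuallyEq_of_mem (hV.mem_nhds hx) (fun y hy => hexp y hy v' w)
    have hfd : fderiv ℝ (fun y => β y v' w) x =
        (∑ k : Fin r, ((x k - z k) •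
            (∫ t in (0:ℝ)..1, (t^(p+1) •
              fderiv ℝ (fun y => α y (Fin.cons (e k) v') w) (γ (x,t)) : Vec r →L[ℝ] ℝ))
          + Gf (Fin.cons (e k) v') w x •
              (ContinuousLinearMap.proj k : Vec r →L[ℝ] ℝ))) := by
      rw [hev.fderiv_eq, hH.fderiv]
    rw [hfd]
    have happ : ∀ k : Fin r,
        (∫ t in (0:ℝ)..1, (t^(p+1) •
            fderiv ℝ (fun y => α y (Fin.cons (e k) v') w) (γ (x,t)) : Vec r →L[ℝ] ℝ)) (v i)
        = ∫ t in (0:ℝ)..1,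
            t^(p+1) * fderiv ℝ (fun y => α y (Fin.cons (e k) v') w) (γ (x,t)) (v i) := by
      intro k
      rw [ContinuousLinearMap.intervalIntegral_apply (hDint _)]
      refine intervalIntegral.integral_congr fun t ht => ?_
      simp [smul_eq_mul]
    rw [ContinuousLinearMap.sum_apply]
    have hterm2 : ∀ k : Fin r,
        (((x k - z k) • (∫ t in (0:ℝ)..1, (t^(p+1) •
            fderiv ℝ (fun y => α y (Fin.cons (e k) v') w) (γ (x,t)) : Vec r →L[ℝ] ℝ))
          + Gf (Fin.cons (e k) v') w x •
              (ContinuousLinearMap.proj k : Vec r →L[ℝ] ℝ)) : Vec r →L[ℝ] ℝ) (v i) =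
        (x k - z k) * (∫ t in (0:ℝ)..1,
            t^(p+1) * fderiv ℝ (fun y => α y (Fin.cons (e k) v') w) (γ (x,t)) (v i))
          + Gf (Fin.cons (e k) v') w x * v i k := by
      intro k
      rw [ContinuousLinearMap.add_apply, ContinuousLinearMap.smul_apply,
        ContinuousLinearMap.smul_apply, ContinuousLinearMap.proj_apply, happ k]
      simp [smul_eq_mul]
    rw [Finset.sum_congr rfl fun k _ => hterm2 k]
    have hT1 : (∑ k : Fin r, Gf (Fin.cons (e k) v') w x * v i k) =
        ∫ t in (0:ℝ)..1, t^p * α (γ (x,t)) (Fin.cons (v i) v') w := by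
      have h1 : ∀ k : Fin r, Gf (Fin.cons (e k) v') w x * v i k =
          ∫ t in (0:ℝ)..1, v i k * (t^p * α (γ (x,t)) (Fin.cons (e k) v') w) := by
        intro k
        rw [intervalIntegral.integral_const_mul, mul_comm]
      rw [Finset.sum_congr rfl fun k _ => h1 k,
        ← intervalIntegral.integral_finset_sum
          (fun k _ => (hInt x hx p (Fin.cons (e k) v') w).const_mul _)]
      refine intervalIntegral.integral_congr fun t ht => ?_
      rw [uIcc_of_le zero_le_one] at ht
      rw [hαexp _ (hstar x hx t ht) w (v i) v', Finset.mul_sum]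
      exact Finset.sum_congr rfl fun k _ => by ring
    have hT2 : (∑ k : Fin r, (x k - z k) *
        (∫ t in (0:ℝ)..1,
          t^(p+1) * fderiv ℝ (fun y => α y (Fin.cons (e k) v') w) (γ (x,t)) (v i))) =
        ∫ t in (0:ℝ)..1,
          t^(p+1) * fderiv ℝ (fun y => α y (Fin.cons (x - z) v') w) (γ (x,t)) (v i) := by
      have h1 : ∀ k : Fin r, (x k - z k) *
          (∫ t in (0:ℝ)..1,
            t^(p+1) * fderiv ℝ (fun y => α y (Fin.cons (e k) v') w) (γ (x,t)) (v i)) =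
          ∫ t in (0:ℝ)..1, (x k - z k) *
            (t^(p+1) * fderiv ℝ (fun y => α y (Fin.cons (e k) v') w) (γ (x,t)) (v i)) := by
        intro k
        rw [intervalIntegral.integral_const_mul]
      rw [Finset.sum_congr rfl fun k _ => h1 k,
        ← intervalIntegral.integral_finset_sum
          (fun k _ => (hDint' (Fin.cons (e k) v') (v i)).const_mul _)]
      refine intervalIntegral.integral_congr fun t ht => ?_
      rw [uIcc_of_le zero_le_one] at ht
      rw [hLexp _ (hstar x hx t ht) (x - z) v']
      rw [ContinuousLinearMap.sum_apply, Finset.mul_sum]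
      refine Finset.sum_congr rfl fun k _ => ?_
      have hxz : (x - z) k = x k - z k := rfl
      simp only [ContinuousLinearMap.smul_apply, smul_eq_mul, hxz]
      ring
    rw [Finset.sum_add_distrib, hT1, hT2,
      ← intervalIntegral.integral_add (hDint' (Fin.cons (x-z) v') (v i)) (hInt x hx p _ w)]
    refine intervalIntegral.integral_congr fun t ht => ?_
    ring
  -- closedness rearrangement and final computation
  show (∑ i : Fin (p+1), (-1:ℝ)^(i:ℕ) *
      fderiv ℝ (fun y => β y (v ∘ i.succAbove) w) x (v i)) = α x v w
  have hpoint : ∀ t ∈ uIcc (0:ℝ) 1,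
      (∑ i : Fin (p+1), (-1:ℝ)^(i:ℕ) *
        (t^p * α (γ (x,t)) (Fin.cons (v i) (v ∘ i.succAbove)) w +
         t^(p+1) * fderiv ℝ (fun y => α y (Fin.cons (x - z) (v ∘ i.succAbove)) w)
           (γ (x,t)) (v i))) =
      ((p:ℝ)+1) * (t^p * α (γ (x,t)) v w) +
        t^(p+1) * fderiv ℝ (fun y => α y v w) (γ (x,t)) (x - z) := by
    intro t ht
    rw [uIcc_of_le zero_le_one] at ht
    have hmem := hstar x hx t ht
    have hcl' : (∑ i : Fin (p+1), (-1:ℝ)^(i:ℕ) *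
        fderiv ℝ (fun y => α y (Fin.cons (x - z) (v ∘ i.succAbove)) w) (γ (x,t)) (v i)) =
        fderiv ℝ (fun y => α y v w) (γ (x,t)) (x - z) := by
      have hsum : (∑ j : Fin (p+1+1), (-1:ℝ)^(j:ℕ) *
          fderiv ℝ (fun y => α y ((Fin.cons (x - z) v : Fin (p+2) → Vec r) ∘ j.succAbove) w)
            (γ (x,t)) ((Fin.cons (x - z) v : Fin (p+2) → Vec r) j)) = 0 :=
        hclosed _ hmem (Fin.cons (x - z) v) w
      rw [Fin.sum_univ_succ] at hsum
      have hterm : ∀ i : Fin (p+1), (-1:ℝ)^(((i.succ : Fin (p+2))):ℕ) *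
          fderiv ℝ (fun y => α y ((Fin.cons (x - z) v : Fin (p+2) → Vec r) ∘
            (i.succ).succAbove) w) (γ (x,t))
            ((Fin.cons (x - z) v : Fin (p+2) → Vec r) i.succ) =
          -((-1:ℝ)^(i:ℕ) *
            fderiv ℝ (fun y => α y (Fin.cons (x - z) (v ∘ i.succAbove)) w) (γ (x,t)) (v i)) := by
        intro i
        rw [cons_comp_succAbove_succ, Fin.cons_succ, Fin.val_succ, pow_succ]
        ring
      have h00 : (-1:ℝ)^(((0 : Fin (p+2))):ℕ) *
          fderiv ℝ (fun y => α y ((Fin.cons (x - z) v : Fin (p+2) → Vec r) ∘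
            (0 : Fin (p+2)).succAbove) w) (γ (x,t))
            ((Fin.cons (x - z) v : Fin (p+2) → Vec r) 0) =
          fderiv ℝ (fun y => α y v w) (γ (x,t)) (x - z) := by
        rw [cons_comp_succAbove_zero, Fin.cons_zero]
        simp
      rw [Finset.sum_congr rfl (fun i _ => hterm i), h00, Finset.sum_neg_distrib] at hsum
      linarith [hsum]
    have hsplit : ∀ i : Fin (p+1), (-1:ℝ)^(i:ℕ) *
        (t^p * α (γ (x,t)) (Fin.cons (v i) (v ∘ i.succAbove)) w +
         t^(p+1) * fderiv ℝ (fun y => α y (Fin.cons (x - z) (v ∘ i.succAbove)) w)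
           (γ (x,t)) (v i)) =
        t^p * α (γ (x,t)) v w + t^(p+1) * ((-1:ℝ)^(i:ℕ) *
          fderiv ℝ (fun y => α y (Fin.cons (x - z) (v ∘ i.succAbove)) w) (γ (x,t)) (v i)) := by
      intro i
      rw [hαcons _ hmem w v i]
      have hsq : (-1:ℝ)^(i:ℕ) * (-1:ℝ)^(i:ℕ) = 1 := by
        rw [← mul_pow]; norm_num
      calc (-1:ℝ)^(i:ℕ) * (t^p * ((-1:ℝ)^(i:ℕ) * α (γ (x,t)) v w) +
            t^(p+1) * fderiv ℝ (fun y => α y (Fin.cons (x - z) (v ∘ i.succAbove)) w)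
              (γ (x,t)) (v i))
          = ((-1:ℝ)^(i:ℕ) * (-1:ℝ)^(i:ℕ)) * (t^p * α (γ (x,t)) v w) +
            t^(p+1) * ((-1:ℝ)^(i:ℕ) *
            fderiv ℝ (fun y => α y (Fin.cons (x - z) (v ∘ i.succAbove)) w) (γ (x,t)) (v i)) := by
            ring
        _ = _ := by rw [hsq, one_mul]
    rw [Finset.sum_congr rfl fun i _ => hsplit i, Finset.sum_add_distrib,
      Finset.sum_const, Finset.card_univ, Fintype.card_fin, ← Finset.mul_sum, hcl',
      nsmul_eq_mul]
    push_cast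
    ring
  have hFTC : (∫ t in (0:ℝ)..1, (((p:ℝ)+1) * (t^p * α (γ (x,t)) v w) +
      t^(p+1) * fderiv ℝ (fun y => α y v w) (γ (x,t)) (x - z))) = α x v w := by
    have hder : ∀ t ∈ uIcc (0:ℝ) 1, HasDerivAt (fun s => s^(p+1) * α (γ (x,s)) v w)
        (((p:ℝ)+1) * (t^p * α (γ (x,t)) v w) +
          t^(p+1) * fderiv ℝ (fun y => α y v w) (γ (x,t)) (x - z)) t := by
      intro t ht
      rw [uIcc_of_le zero_le_one] at ht
      have h1 : HasDerivAt (fun s : ℝ => s^(p+1)) (((p:ℝ)+1) * t^p) t := by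
        have := hasDerivAt_pow (p+1) t
        simpa using this
      have hγt : HasDerivAt (fun s : ℝ => γ (x, s)) (x - z) t := by
        have h := ((hasDerivAt_id t).smul_const (x - z)).const_add z
        show HasDerivAt (fun s : ℝ => z + s • (x - z)) (x - z) t
        simpa using h
      have h2 : HasDerivAt (fun s : ℝ => α (γ (x,s)) v w)
          (fderiv ℝ (fun y => α y v w) (γ (x,t)) (x - z)) t :=
        HasFDerivAt.comp_hasDerivAt (l := fun y => α y v w) t
          ((hdiffα v w (γ (x,t)) (hstar x hx t ht)).hasFDerivAt) hγt
      have := h1.fun_mul h2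
      convert this using 1
      · rfl
      · rfl
      ring
    have hint : IntervalIntegrable (fun t => ((p:ℝ)+1) * (t^p * α (γ (x,t)) v w) +
        t^(p+1) * fderiv ℝ (fun y => α y v w) (γ (x,t)) (x - z)) MeasureTheory.volume 0 1 :=
      ((hInt x hx p v w).const_mul _).add (hDint' v (x - z))
    rw [intervalIntegral.integral_eq_sub_of_hasDerivAt hder hint]
    have hγ1 : γ (x, 1) = x := by
      show z + (1:ℝ) • (x - z) = x
      rw [one_smul]; abel
    rw [hγ1]
    simp [zero_pow]
  calc (∑ i : Fin (p+1), (-1:ℝ)^(i:ℕ) *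
      fderiv ℝ (fun y => β y (v ∘ i.succAbove) w) x (v i))
      = ∑ i : Fin (p+1), ∫ t in (0:ℝ)..1, (-1:ℝ)^(i:ℕ) *
          (t^p * α (γ (x,t)) (Fin.cons (v i) (v ∘ i.succAbove)) w +
           t^(p+1) * fderiv ℝ (fun y => α y (Fin.cons (x - z) (v ∘ i.succAbove)) w)
             (γ (x,t)) (v i)) := by
        refine Finset.sum_congr rfl fun i _ => ?_
        rw [hslice i, ← intervalIntegral.integral_const_mul]
    _ = ∫ t in (0:ℝ)..1, ∑ i : Fin (p+1), (-1:ℝ)^(i:ℕ) *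
          (t^p * α (γ (x,t)) (Fin.cons (v i) (v ∘ i.succAbove)) w +
           t^(p+1) * fderiv ℝ (fun y => α y (Fin.cons (x - z) (v ∘ i.succAbove)) w)
             (γ (x,t)) (v i)) :=
        (intervalIntegral.integral_finset_sum (μ := MeasureTheory.volume)
          (f := fun (i : Fin (p+1)) (t : ℝ) => (-1:ℝ)^(i:ℕ) *
            (t^p * α (γ (x,t)) (Fin.cons (v i) (v ∘ i.succAbove)) w +
             t^(p+1) * fderiv ℝ (fun y => α y (Fin.cons (x - z) (v ∘ i.succAbove)) w)
               (γ (x,t)) (v i)))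
          (fun i _ =>
            ((hInt x hx p (Fin.cons (v i) (v ∘ i.succAbove)) w).add
              (hDint' (Fin.cons (x - z) (v ∘ i.succAbove)) (v i))).const_mul
              ((-1:ℝ)^(i:ℕ)))).symm
    _ = ∫ t in (0:ℝ)..1, (((p:ℝ)+1) * (t^p * α (γ (x,t)) v w) +
          t^(p+1) * fderiv ℝ (fun y => α y v w) (γ (x,t)) (x - z)) :=
        intervalIntegral.integral_congr hpoint
    _ = α x v w := hFTC
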